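/- Let d ≥ 2 and n ≥ 1 be integers, let 1 ≤ k ≤ ⌊log_d(n)⌋, and let 𝐝 = (1, d, d^2, …, d^k). Then, as an equality of rational numbers, p_{𝐝,d}(n) = (1/k!) · ∑ ∏_{ℓ=1}^{k} ((n − ∑_{i=0}^{k−1} d^{i+1} j_i − ∑_{i=0}^{k} d^i ε_i)/d^{k+1} + ℓ), where the sum runs over all ε = (ε_0,…,ε_k) ∈ {0,1}^{k+1} and all tuples (j_0,…,j_{k−1}) of integers with 0 ≤ j_i ≤ d^{k−i} − 1 for 0 ≤ i ≤ k−1 such that ∑_{i=0}^{k−1} d^{i+1} j_i + ∑_{i=0}^{k} d^i ε_i ≡ n (mod d^{k+1}). -/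

import Mathlib

lemma prod_range_ascFactorial (m k : ℕ) : ∏ i ∈ Finset.range k, (m + i) = m.ascFactorial k := by
  induction k with
  | zero => simp
  | succ k ih => rw [Finset.prod_range_succ, ih, Nat.ascFactorial_succ, mul_comm]

lemma prod_Icc_eq_factorial_mul_choose (M k : ℕ) :
    ∏ ℓ ∈ Finset.Icc 1 k, (M + ℓ) = k.factorial * (M + k).choose k := by
  have h1 : ∏ ℓ ∈ Finset.Icc 1 k, (M + ℓ) = ∏ i ∈ Finset.range k, (M + 1 + i) := by
    induction k with
    | zero => simp
    | succ k ih =>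
      rw [Finset.prod_Icc_succ_top (by omega), ih, Finset.prod_range_succ]
      congr 1
      omega
  rw [h1, prod_range_ascFactorial, Nat.ascFactorial_eq_factorial_mul_choose]

lemma adt_card (r : ℕ) : ∀ M, (Finset.Nat.antidiagonalTuple (r + 1) M).card = (M + r).choose r := by
  induction r with
  | zero => intro M; simp
  | succ r ih =>
    intro M
    have hcard : (Finset.Nat.antidiagonalTuple (r + 2) M).card =
        ((Finset.HasAntidiagonal.antidiagonal M).sigma
          (fun p => Finset.Nat.antidiagonalTuple (r + 1) p.2)).card := by
      rw [eq_comm]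
      apply Finset.card_bij
        (fun (a : Σ _p : ℕ × ℕ, Fin (r + 1) → ℕ) _ => (Fin.cons a.1.1 a.2 : Fin (r + 2) → ℕ))
      · rintro ⟨⟨a, b⟩, x⟩ ha
        simp only [Finset.mem_sigma, Finset.mem_antidiagonal,
          Finset.Nat.mem_antidiagonalTuple] at ha ⊢
        rw [Fin.sum_cons, ha.2]
        simpa using ha.1
      · rintro ⟨⟨a, b⟩, x⟩ ha ⟨⟨a', b'⟩, x'⟩ ha' h
        simp only [Finset.mem_sigma, Finset.mem_antidiagonal,
          Finset.Nat.mem_antidiagonalTuple] at ha ha'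
        have h0 : a = a' := by
          have := congrFun h 0; simpa using this
        have ht : x = x' := by
          funext i
          have := congrFun h i.succ; simpa using this
        subst h0; subst ht
        have : b = b' := by omega
        subst this; rfl
      · intro y hy
        simp only [Finset.Nat.mem_antidiagonalTuple] at hy
        refine ⟨⟨(y 0, ∑ i : Fin (r + 1), y i.succ), Fin.tail y⟩, ?_, ?_⟩
        · simp only [Finset.mem_sigma, Finset.HasAntidiagonal.mem_antidiagonal,
            Finset.Nat.mem_antidiagonalTuple]
          constructor
          · rw [← hy]; exact (Fin.sum_univ_succ y).symm
          · rfl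
        · exact Fin.cons_self_tail y
    rw [hcard, Finset.card_sigma]
    calc ∑ p ∈ Finset.HasAntidiagonal.antidiagonal M, (Finset.Nat.antidiagonalTuple (r + 1) p.2).card
        = ∑ i ∈ Finset.range (M + 1), ((M - i) + r).choose r := by
          rw [Finset.Nat.sum_antidiagonal_eq_sum_range_succ_mk]
          exact Finset.sum_congr rfl fun i _ => ih _
      _ = ∑ i ∈ Finset.range (M + 1), (i + r).choose r := by
          rw [← Finset.sum_range_reflect]
          exact Finset.sum_congr rfl fun i hi => by
            simp only [Finset.mem_range] at hi; congr 2; omega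
      _ = (M + (r + 1)).choose (r + 1) := by rw [Nat.sum_range_add_choose]; congr 1

def sE (d k : ℕ) (ε : Fin (k + 1) → ℕ) : ℕ := ∑ i : Fin (k + 1), d ^ (i : ℕ) * ε i
def sJ (d k : ℕ) (j : Fin k → ℕ) : ℕ := ∑ i : Fin k, d ^ ((i : ℕ) + 1) * j i
def mkx (d k : ℕ) (ε : Fin (k + 1) → ℕ) (j : Fin k → ℕ) (z : Fin (k + 1) → ℕ) :
    Fin (k + 1) → ℕ :=
  fun i => ε i + d * ((if h : (i : ℕ) < k then j ⟨i, h⟩ else 0) + d ^ (k - (i : ℕ)) * z i)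

lemma mkx_sum (d k : ℕ) (ε : Fin (k + 1) → ℕ) (j : Fin k → ℕ) (z : Fin (k + 1) → ℕ) :
    ∑ i : Fin (k + 1), d ^ (i : ℕ) * mkx d k ε j z i
      = sE d k ε + sJ d k j + d ^ (k + 1) * ∑ i, z i := by
  have key : ∀ i : Fin (k + 1), d ^ (i : ℕ) * mkx d k ε j z i
      = d ^ (i : ℕ) * ε i
        + d ^ ((i : ℕ) + 1) * (if h : (i : ℕ) < k then j ⟨i, h⟩ else 0)
        + d ^ (k + 1) * z i := by
    intro i
    have hik : (i : ℕ) ≤ k := Nat.lt_succ_iff.mp i.isLt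
    have h1 : d ^ (i : ℕ) * d = d ^ ((i : ℕ) + 1) := (pow_succ d (i : ℕ)).symm
    have h2 : d ^ (i : ℕ) * d * d ^ (k - (i : ℕ)) = d ^ (k + 1) := by
      rw [h1, ← pow_add]; congr 1; omega
    calc d ^ (i : ℕ) * mkx d k ε j z i
        = d ^ (i : ℕ) * ε i
          + d ^ (i : ℕ) * d * (if h : (i : ℕ) < k then j ⟨i, h⟩ else 0)
          + d ^ (i : ℕ) * d * d ^ (k - (i : ℕ)) * z i := by unfold mkx; ring
      _ = _ := by rw [h2, h1]
  have hsJ : (∑ i : Fin (k + 1), d ^ ((i : ℕ) + 1) * if h : (i : ℕ) < k then j ⟨i, h⟩ else 0)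
      = sJ d k j := by
    rw [Fin.sum_univ_castSucc]
    have hlast : (d ^ ((Fin.last k : ℕ) + 1) *
        if h : ((Fin.last k : ℕ)) < k then j ⟨(Fin.last k : ℕ), h⟩ else 0) = 0 := by
      simp
    rw [hlast, add_zero]
    refine Finset.sum_congr rfl fun i _ => ?_
    simp only [Fin.coe_castSucc, dif_pos i.isLt, Fin.eta]
  rw [Finset.sum_congr rfl fun i _ => key i, Finset.sum_add_distrib, Finset.sum_add_distrib,
    ← Finset.mul_sum, hsJ]
  rfl

section recover
variable {d k : ℕ} (hd : 2 ≤ d) {ε : Fin (k + 1) → ℕ} (hε : ∀ i, ε i ≤ 1)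
  {j : Fin k → ℕ} (hj : ∀ i, j i < d ^ (k - (i : ℕ))) (z : Fin (k + 1) → ℕ)

include hd hε in
lemma mkx_mod (i : Fin (k + 1)) : mkx d k ε j z i % d = ε i := by
  unfold mkx
  rw [Nat.add_mul_mod_self_left, Nat.mod_eq_of_lt (lt_of_le_of_lt (hε i) hd)]

include hd hε in
lemma mkx_div (i : Fin (k + 1)) :
    mkx d k ε j z i / d = (if h : (i : ℕ) < k then j ⟨i, h⟩ else 0) + d ^ (k - (i : ℕ)) * z i := by
  unfold mkx
  rw [Nat.add_mul_div_left _ _ (by omega : 0 < d),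
    Nat.div_eq_of_lt (lt_of_le_of_lt (hε i) hd), Nat.zero_add]

include hd hε hj in
lemma mkx_j (i : Fin k) :
    mkx d k ε j z i.castSucc / d % d ^ (k - (i : ℕ)) = j i := by
  rw [mkx_div hd hε]
  simp only [Fin.coe_castSucc, dif_pos i.isLt, Fin.eta]
  rw [Nat.add_mul_mod_self_left, Nat.mod_eq_of_lt (hj i)]

include hd hε hj in
lemma mkx_z (i : Fin (k + 1)) :
    mkx d k ε j z i / d / d ^ (k - (i : ℕ)) = z i := by
  rw [mkx_div hd hε]
  have hJ : (if h : (i : ℕ) < k then j ⟨i, h⟩ else 0) < d ^ (k - (i : ℕ)) := by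
    split
    · exact hj _
    · exact Nat.pow_pos (by omega : 0 < d)
  rw [Nat.add_mul_div_left _ _ (Nat.pow_pos (by omega : 0 < d)),
    Nat.div_eq_of_lt hJ, Nat.zero_add]

end recover

lemma mkx_self (d k : ℕ) (x : Fin (k + 1) → ℕ) :
    mkx d k (fun i => x i % d)
      (fun i : Fin k => x i.castSucc / d % d ^ (k - (i : ℕ)))
      (fun i => x i / d / d ^ (k - (i : ℕ))) = x := by
  funext i
  simp only [mkx]
  by_cases h : (i : ℕ) < k
  · have hcast : (⟨(i : ℕ), h⟩ : Fin k).castSucc = i := by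
      ext; rfl
    rw [dif_pos h]
    simp only [hcast]
    rw [show (⟨(i : ℕ), h⟩ : Fin k).val = (i : ℕ) from rfl]
    rw [Nat.mod_add_div (x i / d) (d ^ (k - (i : ℕ)))]
    exact Nat.mod_add_div (x i) d
  · have h0 : k - (i : ℕ) = 0 := by omega
    rw [dif_neg h, h0]
    simp only [pow_zero, one_mul, Nat.div_one, Nat.zero_add]
    exact Nat.mod_add_div (x i) d

lemma count_lemma (d n k : ℕ) (hd : 2 ≤ d) :
    ((Fintype.piFinset fun _ : Fin (k + 1) => Finset.range (n + 1)).filter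
      (fun x => (∑ i : Fin (k + 1), d ^ (i : ℕ) * x i = n) ∧
        ∀ i, x i % d = 0 ∨ x i % d = 1)).card
    = ∑ p ∈ ((Fintype.piFinset fun _ : Fin (k + 1) => ({0, 1} : Finset ℕ)) ×ˢ
          Fintype.piFinset fun i : Fin k => Finset.range (d ^ (k - (i : ℕ)))).filter
          (fun p => (sJ d k p.2 + sE d k p.1) % d ^ (k + 1) = n % d ^ (k + 1) ∧
            sJ d k p.2 + sE d k p.1 ≤ n),
        ((n - (sJ d k p.2 + sE d k p.1)) / d ^ (k + 1) + k).choose k := by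
  classical
  have hd0 : 0 < d := by omega
  have hD : 0 < d ^ (k + 1) := Nat.pow_pos hd0
  rw [Finset.sum_congr rfl (fun p _ =>
    (adt_card k ((n - (sJ d k p.2 + sE d k p.1)) / d ^ (k + 1))).symm), ← Finset.card_sigma]
  refine (Finset.card_bij (fun (a : Σ _p : (Fin (k + 1) → ℕ) × (Fin k → ℕ), Fin (k + 1) → ℕ) _ => mkx d k a.1.1 a.1.2 a.2) ?_ ?_ ?_).symm
  · rintro ⟨⟨ε, j⟩, z⟩ ha
    rw [Finset.mem_sigma] at ha
    obtain ⟨hp, hz⟩ := ha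
    rw [Finset.mem_filter, Finset.mem_product] at hp
    obtain ⟨⟨hεm, hjm⟩, hmod, hle⟩ := hp
    rw [Fintype.mem_piFinset] at hεm hjm
    have hε : ∀ i, ε i ≤ 1 := by
      intro i; have := hεm i; simp at this; omega
    have hj : ∀ i : Fin k, j i < d ^ (k - (i : ℕ)) := by
      intro i; have := hjm i; simpa using this
    rw [Finset.Nat.mem_antidiagonalTuple] at hz
    dsimp only at hmod hle hz ⊢
    have hdvd : d ^ (k + 1) ∣ (n - (sJ d k j + sE d k ε)) :=
      Nat.dvd_of_mod_eq_zero (Nat.sub_mod_eq_zero_of_mod_eq hmod.symm)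
    have hsum : ∑ i : Fin (k + 1), d ^ (i : ℕ) * mkx d k ε j z i = n := by
      rw [mkx_sum, hz, Nat.mul_div_cancel' hdvd]
      omega
    rw [Finset.mem_filter]
    refine ⟨?_, hsum, fun i => ?_⟩
    · rw [Fintype.mem_piFinset]
      intro i
      rw [Finset.mem_range]
      have h1 : d ^ (i : ℕ) * mkx d k ε j z i ≤ n := by
        rw [← hsum]
        exact Finset.single_le_sum (f := fun i : Fin (k + 1) => d ^ (i : ℕ) * mkx d k ε j z i)
          (fun i _ => Nat.zero_le _) (Finset.mem_univ i)
      have h2 : mkx d k ε j z i ≤ d ^ (i : ℕ) * mkx d k ε j z i :=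
        Nat.le_mul_of_pos_left _ (Nat.pow_pos hd0)
      omega
    · rw [mkx_mod hd hε]
      have := hε i; omega
  · rintro ⟨⟨ε, j⟩, z⟩ ha ⟨⟨ε', j'⟩, z'⟩ ha' heq
    rw [Finset.mem_sigma, Finset.mem_filter, Finset.mem_product] at ha ha'
    obtain ⟨⟨⟨hεm, hjm⟩, -⟩, -⟩ := ha
    obtain ⟨⟨⟨hεm', hjm'⟩, -⟩, -⟩ := ha'
    rw [Fintype.mem_piFinset] at hεm hjm hεm' hjm'
    have hε : ∀ i, ε i ≤ 1 := by intro i; have := hεm i; simp at this; omega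
    have hε' : ∀ i, ε' i ≤ 1 := by intro i; have := hεm' i; simp at this; omega
    have hj : ∀ i : Fin k, j i < d ^ (k - (i : ℕ)) := by
      intro i; have := hjm i; simpa using this
    have hj' : ∀ i : Fin k, j' i < d ^ (k - (i : ℕ)) := by
      intro i; have := hjm' i; simpa using this
    simp only at heq
    have he : ε = ε' := funext fun i => by
      rw [← mkx_mod hd hε z i, ← mkx_mod hd hε' z' i, heq]
    have hjj : j = j' := funext fun i => by
      rw [← mkx_j hd hε hj z i, ← mkx_j hd hε' hj' z' i, heq]
    have hzz : z = z' := funext fun i => by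
      rw [← mkx_z hd hε hj z i, ← mkx_z hd hε' hj' z' i, heq]
    subst he; subst hjj; subst hzz; rfl
  · intro x hx
    rw [Finset.mem_filter] at hx
    obtain ⟨-, hsum, hmod⟩ := hx
    set ε : Fin (k + 1) → ℕ := fun i => x i % d with hεdef
    set j : Fin k → ℕ := fun i : Fin k => x i.castSucc / d % d ^ (k - (i : ℕ)) with hjdef
    set z : Fin (k + 1) → ℕ := fun i => x i / d / d ^ (k - (i : ℕ)) with hzdef
    have hself : mkx d k ε j z = x := mkx_self d k x
    have hkey : sJ d k j + sE d k ε + d ^ (k + 1) * ∑ i, z i = n := by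
      have := mkx_sum d k ε j z
      rw [hself, hsum] at this
      omega
    refine ⟨⟨⟨ε, j⟩, z⟩, ?_, hself⟩
    rw [Finset.mem_sigma, Finset.mem_filter, Finset.mem_product]
    dsimp only
    refine ⟨⟨⟨?_, ?_⟩, ?_, ?_⟩, ?_⟩
    · rw [Fintype.mem_piFinset]
      intro i
      have := hmod i
      simp only [hεdef]
      rcases this with h | h <;> simp [h]
    · rw [Fintype.mem_piFinset]
      intro i
      rw [Finset.mem_range]
      exact Nat.mod_lt _ (Nat.pow_pos hd0)
    · conv_rhs => rw [← hkey]
      rw [Nat.add_mul_mod_self_left]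
    · omega
    · rw [Finset.Nat.mem_antidiagonalTuple]
      have : n - (sJ d k j + sE d k ε) = d ^ (k + 1) * ∑ i, z i := by omega
      rw [this, Nat.mul_div_cancel_left _ hD]

lemma s_bound (d k : ℕ) (hd : 2 ≤ d) (ε : Fin (k + 1) → ℕ) (hε : ∀ i, ε i ≤ 1)
    (j : Fin k → ℕ) (hj : ∀ i : Fin k, j i < d ^ (k - (i : ℕ))) :
    sJ d k j + sE d k ε ≤ k * d ^ (k + 1) + 1 := by
  have hE : sE d k ε ≤ ∑ i : Fin (k + 1), d ^ (i : ℕ) := by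
    apply Finset.sum_le_sum
    intro i _
    calc d ^ (i : ℕ) * ε i ≤ d ^ (i : ℕ) * 1 := Nat.mul_le_mul_left _ (hε i)
      _ = d ^ (i : ℕ) := Nat.mul_one _
  have hsplit : ∑ i : Fin (k + 1), d ^ (i : ℕ) = 1 + ∑ i : Fin k, d ^ ((i : ℕ) + 1) := by
    rw [Fin.sum_univ_succ]
    simp [Fin.val_succ]
  have hJ : sJ d k j + ∑ i : Fin k, d ^ ((i : ℕ) + 1) ≤ k * d ^ (k + 1) := by
    rw [sJ, ← Finset.sum_add_distrib]
    calc ∑ i : Fin k, (d ^ ((i : ℕ) + 1) * j i + d ^ ((i : ℕ) + 1))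
        = ∑ i : Fin k, d ^ ((i : ℕ) + 1) * (j i + 1) := by
          refine Finset.sum_congr rfl fun i _ => by ring
      _ ≤ ∑ i : Fin k, d ^ ((i : ℕ) + 1) * d ^ (k - (i : ℕ)) := by
          apply Finset.sum_le_sum
          intro i _
          exact Nat.mul_le_mul_left _ (hj i)
      _ = ∑ _i : Fin k, d ^ (k + 1) := by
          refine Finset.sum_congr rfl fun i _ => ?_
          rw [← pow_add]
          congr 1
          have := i.isLt
          omega
      _ = k * d ^ (k + 1) := by
          rw [Finset.sum_const, Finset.card_univ, Fintype.card_fin, smul_eq_mul]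
  omega

/-- Formula for `p_{𝐝,d}(n)` where `𝐝 = (1, d, …, d^k)` and
`1 ≤ k ≤ ⌊log_d n⌋`:
`p_{𝐝,d}(n) = (1/k!) ∑ ∏_{ℓ=1}^{k}
  ((n - ∑_{i=0}^{k-1} d^{i+1} j_i - ∑_{i=0}^{k} d^i ε_i)/d^{k+1} + ℓ)`,
the sum over `ε ∈ {0,1}^{k+1}` and `0 ≤ j_i ≤ d^{k-i} - 1` with
`∑ d^{i+1} j_i + ∑ d^i ε_i ≡ n (mod d^{k+1})`. -/
theorem stmt_5 (d n k : ℕ) (hd : 2 ≤ d) (hn : 1 ≤ n)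
    (hk1 : 1 ≤ k) (hk2 : k ≤ Nat.log d n) :
    (Set.ncard {x : Fin (k + 1) → ℕ |
        (∑ i : Fin (k + 1), d ^ (i : ℕ) * x i = n) ∧ ∀ i, x i % d = 0 ∨ x i % d = 1} : ℚ) =
      (1 / (Nat.factorial k : ℚ)) *
        ∑ ε ∈ Fintype.piFinset (fun _ : Fin (k + 1) => ({0, 1} : Finset ℕ)),
          ∑ j ∈ (Fintype.piFinset fun i : Fin k => Finset.range (d ^ (k - (i : ℕ)))).filter
              (fun j => (∑ i : Fin k, d ^ ((i : ℕ) + 1) * j i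
                  + ∑ i : Fin (k + 1), d ^ (i : ℕ) * ε i) % d ^ (k + 1) = n % d ^ (k + 1)),
            ∏ ℓ ∈ Finset.Icc 1 k,
              (((n : ℚ) - ∑ i : Fin k, (d : ℚ) ^ ((i : ℕ) + 1) * j i
                  - ∑ i : Fin (k + 1), (d : ℚ) ^ (i : ℕ) * ε i) / (d : ℚ) ^ (k + 1)
                + (ℓ : ℚ)) := by
  classical
  have hd0 : 0 < d := by omega
  have hD : 0 < d ^ (k + 1) := Nat.pow_pos hd0
  have hfact : (Nat.factorial k : ℚ) ≠ 0 := Nat.cast_ne_zero.mpr (Nat.factorial_ne_zero k)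
  have hset : {x : Fin (k + 1) → ℕ |
      (∑ i : Fin (k + 1), d ^ (i : ℕ) * x i = n) ∧ ∀ i, x i % d = 0 ∨ x i % d = 1}
      = ↑((Fintype.piFinset fun _ : Fin (k + 1) => Finset.range (n + 1)).filter
        (fun x => (∑ i : Fin (k + 1), d ^ (i : ℕ) * x i = n) ∧
          ∀ i, x i % d = 0 ∨ x i % d = 1)) := by
    ext x
    simp only [Set.mem_setOf_eq, Finset.coe_filter, Fintype.mem_piFinset, Finset.mem_range]
    constructor
    · rintro ⟨hs, hm⟩
      refine ⟨fun i => ?_, hs, hm⟩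
      have h1 : d ^ (i : ℕ) * x i ≤ n := hs ▸ Finset.single_le_sum
        (f := fun i : Fin (k + 1) => d ^ (i : ℕ) * x i)
        (fun _ _ => Nat.zero_le _) (Finset.mem_univ i)
      have h2 : x i ≤ d ^ (i : ℕ) * x i :=
        Nat.le_mul_of_pos_left _ (Nat.pow_pos hd0)
      omega
    · rintro ⟨-, hs, hm⟩; exact ⟨hs, hm⟩
  rw [hset, Set.ncard_coe_finset, count_lemma d n k hd, Nat.cast_sum, Finset.sum_filter,
    Finset.mul_sum]
  have h2 : ∀ ε ∈ Fintype.piFinset (fun _ : Fin (k + 1) => ({0, 1} : Finset ℕ)),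
      (1 / (Nat.factorial k : ℚ)) *
        ∑ j ∈ (Fintype.piFinset fun i : Fin k => Finset.range (d ^ (k - (i : ℕ)))).filter
            (fun j => (∑ i : Fin k, d ^ ((i : ℕ) + 1) * j i
                + ∑ i : Fin (k + 1), d ^ (i : ℕ) * ε i) % d ^ (k + 1) = n % d ^ (k + 1)),
          ∏ ℓ ∈ Finset.Icc 1 k,
            (((n : ℚ) - ∑ i : Fin k, (d : ℚ) ^ ((i : ℕ) + 1) * j i
                - ∑ i : Fin (k + 1), (d : ℚ) ^ (i : ℕ) * ε i) / (d : ℚ) ^ (k + 1) + (ℓ : ℚ))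
      = ∑ j ∈ Fintype.piFinset fun i : Fin k => Finset.range (d ^ (k - (i : ℕ))),
          (if (∑ i : Fin k, d ^ ((i : ℕ) + 1) * j i
                + ∑ i : Fin (k + 1), d ^ (i : ℕ) * ε i) % d ^ (k + 1) = n % d ^ (k + 1) then
            (1 / (Nat.factorial k : ℚ)) *
            ∏ ℓ ∈ Finset.Icc 1 k,
              (((n : ℚ) - ∑ i : Fin k, (d : ℚ) ^ ((i : ℕ) + 1) * j i
                  - ∑ i : Fin (k + 1), (d : ℚ) ^ (i : ℕ) * ε i) / (d : ℚ) ^ (k + 1) + (ℓ : ℚ))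
          else 0) := by
    intro ε _
    rw [Finset.mul_sum, Finset.sum_filter]
  rw [Finset.sum_congr rfl h2, ← Finset.sum_product']
  apply Finset.sum_congr rfl
  rintro ⟨ε, j⟩ hp
  rw [Finset.mem_product, Fintype.mem_piFinset, Fintype.mem_piFinset] at hp
  obtain ⟨hεm, hjm⟩ := hp
  have hε : ∀ i, ε i ≤ 1 := by intro i; have := hεm i; simp at this; omega
  have hj : ∀ i : Fin k, j i < d ^ (k - (i : ℕ)) := by
    intro i; have := hjm i; simpa using this
  dsimp only
  delta sJ sE
  set S1 : ℕ := ∑ i : Fin k, d ^ ((i : ℕ) + 1) * j i with hS1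
  set S2 : ℕ := ∑ i : Fin (k + 1), d ^ (i : ℕ) * ε i with hS2
  have hc1 : ((S1 : ℕ) : ℚ) = ∑ i : Fin k, (d : ℚ) ^ ((i : ℕ) + 1) * (j i : ℚ) := by
    rw [hS1]; push_cast; ring
  have hc2 : ((S2 : ℕ) : ℚ) = ∑ i : Fin (k + 1), (d : ℚ) ^ (i : ℕ) * (ε i : ℚ) := by
    rw [hS2]; push_cast; ring
  rw [← hc1, ← hc2]
  by_cases h1 : (S1 + S2) % d ^ (k + 1) = n % d ^ (k + 1)
  · by_cases hle : S1 + S2 ≤ n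
    · rw [if_pos (And.intro h1 hle), if_pos h1]
      have hdvd : d ^ (k + 1) ∣ n - (S1 + S2) :=
        Nat.dvd_of_mod_eq_zero (Nat.sub_mod_eq_zero_of_mod_eq h1.symm)
      set M : ℕ := (n - (S1 + S2)) / d ^ (k + 1) with hM
      have hDM : d ^ (k + 1) * M = n - (S1 + S2) := Nat.mul_div_cancel' hdvd
      have hfrac : ((n : ℚ) - (S1 : ℚ) - (S2 : ℚ)) / (d : ℚ) ^ (k + 1) = (M : ℚ) := by
        have hcast : (n : ℚ) - (S1 : ℚ) - (S2 : ℚ) = ((n - (S1 + S2) : ℕ) : ℚ) := by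
          rw [Nat.cast_sub hle]; push_cast; ring
        have hDq : ((d : ℚ) ^ (k + 1)) ≠ 0 := by positivity
        rw [hcast, ← hDM]
        push_cast
        field_simp
      have hprod : ∏ ℓ ∈ Finset.Icc 1 k, ((M : ℚ) + (ℓ : ℚ))
          = ((∏ ℓ ∈ Finset.Icc 1 k, (M + ℓ) : ℕ) : ℚ) := by push_cast; rfl
      simp only [hfrac]
      rw [hprod, prod_Icc_eq_factorial_mul_choose, Nat.cast_mul]
      field_simp
    · rw [if_neg (fun h : _ ∧ _ => hle h.2), if_pos h1]
      have hdvd : d ^ (k + 1) ∣ (S1 + S2) - n :=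
        Nat.dvd_of_mod_eq_zero (Nat.sub_mod_eq_zero_of_mod_eq h1)
      set t : ℕ := ((S1 + S2) - n) / d ^ (k + 1) with ht
      have hDt : d ^ (k + 1) * t = (S1 + S2) - n := Nat.mul_div_cancel' hdvd
      have ht1 : 1 ≤ t := by
        rcases Nat.eq_zero_or_pos t with h | h
        · rw [h, Nat.mul_zero] at hDt; omega
        · exact h
      have hbound : S1 + S2 ≤ k * d ^ (k + 1) + 1 := by
        have := s_bound d k hd ε hε j hj
        rw [sJ, sE] at this
        omega
      have htk : t ≤ k := by
        by_contra hcon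
        push_neg at hcon
        have h3 : d ^ (k + 1) * (k + 1) ≤ d ^ (k + 1) * t := Nat.mul_le_mul_left _ hcon
        have h4 : d ^ (k + 1) * (k + 1) = d ^ (k + 1) * k + d ^ (k + 1) := by ring
        have h5 : k * d ^ (k + 1) = d ^ (k + 1) * k := by ring
        omega
      have hfrac : ((n : ℚ) - (S1 : ℚ) - (S2 : ℚ)) / (d : ℚ) ^ (k + 1) = -(t : ℚ) := by
        have hst : S1 + S2 = n + d ^ (k + 1) * t := by omega
        have hq : (S1 : ℚ) + (S2 : ℚ) = (n : ℚ) + (d : ℚ) ^ (k + 1) * (t : ℚ) := by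
          exact_mod_cast congrArg (fun m : ℕ => (m : ℚ)) hst
        have hDq : ((d : ℚ) ^ (k + 1)) ≠ 0 := by positivity
        have hq2 : (n : ℚ) - (S1 : ℚ) - (S2 : ℚ) = -((d : ℚ) ^ (k + 1) * (t : ℚ)) := by
          linarith
        rw [hq2, neg_div, mul_div_cancel_left₀ _ hDq]
      rw [eq_comm, mul_eq_zero]
      right
      apply Finset.prod_eq_zero (Finset.mem_Icc.mpr ⟨ht1, htk⟩)
      rw [hfrac]
      ring
  · rw [if_neg (fun h : _ ∧ _ => h1 h.1), if_neg h1]
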